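/- Let 0 < q < 1, λ > 0, and p > 1. For every sequence (a_n)_{n≥0} of nonnegative reals, ∑_{n=0}^∞ (q^{-λn} ∑_{k=n}^∞ q^{λk} a_k)^p ≤ (1-q^λ)^{-p} ∑_{n=0}^∞ a_n^p. -/

import Mathlib

open scoped ENNReal
open MeasureTheory

/-- Hölder's inequality for `tsum` over `ℕ` in `ℝ≥0∞`. -/
lemma tsum_holder_enn {p q : ℝ} (hpq : p.HolderConjugate q) (f g : ℕ → ℝ≥0∞) :
    ∑' n : ℕ, f n * g n ≤
      (∑' n : ℕ, f n ^ p) ^ (1 / p) * (∑' n : ℕ, g n ^ q) ^ (1 / q) := by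
  have h := ENNReal.lintegral_mul_le_Lp_mul_Lq (Measure.count (α := ℕ)) hpq
    (measurable_of_countable f).aemeasurable (measurable_of_countable g).aemeasurable
  simpa [lintegral_count] using h

theorem copson_N (q l p : ℝ) (hq : 0 < q) (hq1 : q < 1) (hl : 0 < l)
    (hp : 1 < p) (a : ℕ → ℝ≥0∞) :
    ∑' n : ℕ, ((ENNReal.ofReal q) ^ (-(l * (n : ℝ))) *
        ∑' m : ℕ, (ENNReal.ofReal q) ^ (l * ((n : ℝ) + (m : ℝ))) * a (n + m)) ^ p
      ≤ ENNReal.ofReal ((1 - q ^ l) ^ (-p)) * ∑' n : ℕ, (a n) ^ p := by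
  set R : ℝ≥0∞ := ENNReal.ofReal q with hRdef
  have hR0 : R ≠ 0 := by simp [hRdef, ENNReal.ofReal_eq_zero, not_le, hq]
  have hRtop : R ≠ ⊤ := ENNReal.ofReal_ne_top
  set r : ℝ≥0∞ := R ^ l with hrdef
  have hr0 : r ≠ 0 := by
    simp [hrdef, ENNReal.rpow_eq_zero_iff, hR0, hRtop, hl, not_lt.2 hl.le]
  have hrtop : r ≠ ⊤ := by
    simp [hrdef, ENNReal.rpow_eq_top_iff, hR0, hRtop, hl, not_lt.2 hl.le]
  have hql1 : q ^ l < 1 := Real.rpow_lt_one hq.le hq1 hl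
  have hql0 : 0 < q ^ l := Real.rpow_pos_of_pos hq l
  have hrq : r = ENNReal.ofReal (q ^ l) := by
    rw [hrdef, hRdef]; exact ENNReal.ofReal_rpow_of_pos hq
  have hr1 : r < 1 := by
    rw [hrq, ← ENNReal.ofReal_one]
    exact ENNReal.ofReal_lt_ofReal_iff_of_nonneg hql0.le |>.2 hql1
  -- the geometric sum
  set T : ℝ≥0∞ := (1 - r)⁻¹ with hTdef
  have hgeom : ∑' m : ℕ, r ^ m = T := ENNReal.tsum_geometric r
  have h1r0 : (1 : ℝ≥0∞) - r ≠ 0 := by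
    simp [tsub_eq_zero_iff_le, not_le, hr1]
  have hT0 : T ≠ 0 :=
    ENNReal.inv_ne_zero.mpr (ne_top_of_le_ne_top ENNReal.one_ne_top tsub_le_self)
  have hTtop : T ≠ ⊤ := by simp [hTdef, h1r0]
  -- Step 1 : simplify the inner sum
  have key : ∀ n : ℕ, (R ^ (-(l * (n : ℝ))) *
      ∑' m : ℕ, R ^ (l * ((n : ℝ) + (m : ℝ))) * a (n + m))
      = ∑' m : ℕ, r ^ m * a (n + m) := by
    intro n
    have h1 : ∀ m : ℕ, R ^ (l * ((n : ℝ) + (m : ℝ))) * a (n + m)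
        = R ^ (l * (n : ℝ)) * (r ^ m * a (n + m)) := by
      intro m
      have : l * ((n : ℝ) + (m : ℝ)) = l * (n : ℝ) + l * (m : ℝ) := by ring
      rw [this, ENNReal.rpow_add _ _ hR0 hRtop, ENNReal.rpow_mul R l (m : ℝ),
        ENNReal.rpow_natCast, mul_assoc, ← hrdef]
    simp only [h1]
    rw [ENNReal.tsum_mul_left, ← mul_assoc, ← ENNReal.rpow_add _ _ hR0 hRtop]
    simp
  simp only [key]
  -- Step 2 : Hölder for each n
  set pc : ℝ := Real.conjExponent p with hpcdef
  have hpq : p.HolderConjugate pc := Real.HolderConjugate.conjExponent hp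
  have hp0 : (0:ℝ) ≤ p := hpq.nonneg
  have step2 : ∀ n : ℕ, (∑' m : ℕ, r ^ m * a (n + m)) ^ p
      ≤ T ^ (p - 1) * ∑' m : ℕ, r ^ m * (a (n + m)) ^ p := by
    intro n
    set f : ℕ → ℝ≥0∞ := fun m => (r ^ m) ^ (1 / p) * a (n + m) with hf
    set g : ℕ → ℝ≥0∞ := fun m => (r ^ m) ^ (1 / pc) with hg
    have hrm0 : ∀ m : ℕ, (r : ℝ≥0∞) ^ m ≠ 0 := fun m => pow_ne_zero m hr0
    have hrmtop : ∀ m : ℕ, (r : ℝ≥0∞) ^ m ≠ ⊤ := fun m => ENNReal.pow_ne_top hrtop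
    have hfg : ∀ m : ℕ, f m * g m = r ^ m * a (n + m) := by
      intro m
      rw [hf, hg]
      simp only
      rw [mul_comm ((r ^ m) ^ (1 / p)) (a (n + m)), mul_assoc,
        ← ENNReal.rpow_add _ _ (hrm0 m) (hrmtop m)]
      rw [one_div, one_div, hpq.inv_add_inv_eq_one, ENNReal.rpow_one, mul_comm]
    have hfp : ∀ m : ℕ, f m ^ p = r ^ m * (a (n + m)) ^ p := by
      intro m
      rw [hf]
      simp only
      rw [ENNReal.mul_rpow_of_nonneg _ _ hp0, ← ENNReal.rpow_mul,
        one_div, inv_mul_cancel₀ hpq.ne_zero, ENNReal.rpow_one]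
    have hgq : ∀ m : ℕ, g m ^ pc = r ^ m := by
      intro m
      rw [hg]
      simp only
      rw [← ENNReal.rpow_mul, one_div, inv_mul_cancel₀ hpq.symm.ne_zero, ENNReal.rpow_one]
    have hold := tsum_holder_enn hpq f g
    simp only [hfp, hgq, hgeom] at hold
    rw [← tsum_congr hfg] at *
    calc (∑' m : ℕ, f m * g m) ^ p
        ≤ ((∑' m : ℕ, r ^ m * a (n + m) ^ p) ^ (1 / p) * T ^ (1 / pc)) ^ p := by
          exact ENNReal.rpow_le_rpow hold hp0
      _ = T ^ (p - 1) * ∑' m : ℕ, r ^ m * (a (n + m)) ^ p := by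
          rw [ENNReal.mul_rpow_of_nonneg _ _ hp0, ← ENNReal.rpow_mul, ← ENNReal.rpow_mul,
            one_div, inv_mul_cancel₀ hpq.ne_zero, ENNReal.rpow_one, mul_comm]
          congr 2
          rw [mul_comm, mul_one_div, hpq.div_conj_eq_sub_one]
  -- Step 3 : sum over n
  have step3 : ∑' n : ℕ, (∑' m : ℕ, r ^ m * a (n + m)) ^ p
      ≤ T ^ p * ∑' n : ℕ, (a n) ^ p := by
    calc ∑' n : ℕ, (∑' m : ℕ, r ^ m * a (n + m)) ^ p
        ≤ ∑' n : ℕ, T ^ (p - 1) * ∑' m : ℕ, r ^ m * (a (n + m)) ^ p :=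
          ENNReal.tsum_le_tsum step2
      _ = T ^ (p - 1) * ∑' m : ℕ, r ^ m * ∑' n : ℕ, (a (n + m)) ^ p := by
          rw [ENNReal.tsum_mul_left, ENNReal.tsum_comm]
          congr 1
          exact tsum_congr fun m => (ENNReal.tsum_mul_left).symm ▸ rfl
      _ ≤ T ^ (p - 1) * ∑' m : ℕ, r ^ m * ∑' n : ℕ, (a n) ^ p := by
          refine mul_le_mul_right (ENNReal.tsum_le_tsum fun m => mul_le_mul_right ?_ _) _
          exact Summable.tsum_le_tsum_of_inj (fun n => n + m)
            (add_left_injective m) (fun c _ => zero_le)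
            (fun n => le_rfl) ENNReal.summable ENNReal.summable
      _ = T ^ (p - 1) * T * ∑' n : ℕ, (a n) ^ p := by
          rw [ENNReal.tsum_mul_right, hgeom, mul_assoc, mul_comm T, ← mul_assoc]
      _ = T ^ p * ∑' n : ℕ, (a n) ^ p := by
          congr 1
          have h2 : T ^ (p - 1) * T ^ (1:ℝ) = T ^ p := by
            rw [← ENNReal.rpow_add _ _ hT0 hTtop]; ring_nf
          rw [← h2, ENNReal.rpow_one]
  -- Step 4 : identify the constant
  have hconst : T ^ p = ENNReal.ofReal ((1 - q ^ l) ^ (-p)) := by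
    have h1 : (1 : ℝ≥0∞) - r = ENNReal.ofReal (1 - q ^ l) := by
      rw [ENNReal.ofReal_sub 1 hql0.le, ENNReal.ofReal_one, hrq]
    have hs0 : (0:ℝ) < 1 - q ^ l := by linarith
    rw [hTdef, h1, ENNReal.inv_rpow, ENNReal.ofReal_rpow_of_pos hs0,
      ← ENNReal.ofReal_inv_of_pos (Real.rpow_pos_of_pos hs0 p),
      ← Real.rpow_neg hs0.le]
  rw [← hconst]
  exact step3
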